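/- Every spectrahedral set is amenable: for every n and every affine subspace V of the space of n×n real matrices, the set PSD^n ∩ V (where PSD^n is the cone of n×n real symmetric positive semidefinite matrices) is an amenable closed convex set, and so is the image of PSD^n ∩ V under any injective affine map. -/

import Mathlib

open Metric Bornology

attribute [local instance] Matrix.frobeniusNormedAddCommGroup Matrix.frobeniusNormedSpace

/-- `F` is a face of the convex set `C`. -/
def IsFace {E : Type*} [NormedAddCommGroup E] [NormedSpace ℝ E] (C F : Set E) : Prop :=
  IsClosed F ∧ Convex ℝ F ∧ F ⊆ C ∧
    ∀ x ∈ C, ∀ y ∈ C, ∀ α : ℝ, 0 < α → α < 1 → α • x + (1 - α) • y ∈ F → x ∈ F ∧ y ∈ F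

/-- `F` is an amenable face of `C`. -/
def IsAmenableFace {E : Type*} [NormedAddCommGroup E] [NormedSpace ℝ E] (C F : Set E) : Prop :=
  ∀ B : Set E, IsBounded B → ∃ κ > (0:ℝ),
    ∀ x ∈ (affineSpan ℝ F : Set E) ∩ B, infDist x F ≤ κ * infDist x C

/-- `C` is an amenable convex set: every face of `C` is an amenable face. -/
def AmenableSet {E : Type*} [NormedAddCommGroup E] [NormedSpace ℝ E] (C : Set E) : Prop :=
  ∀ F : Set E, IsFace C F → IsAmenableFace C F

/-- The cone of `n × n` real symmetric positive semidefinite matrices. -/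
def psdCone (n : ℕ) : Set (Matrix (Fin n) (Fin n) ℝ) := {X | X.PosSemidef}

namespace SpectraAux

open Matrix

variable {n : ℕ}

lemma frob_sq (A : Matrix (Fin n) (Fin n) ℝ) : ‖A‖ ^ 2 = ∑ i, ∑ j, (A i j) ^ 2 := by
  have hS : (0:ℝ) ≤ ∑ i, ∑ j, ‖A i j‖ ^ (2:ℝ) := by
    refine Finset.sum_nonneg fun i _ => Finset.sum_nonneg fun j _ => ?_
    positivity
  rw [Matrix.frobenius_norm_def]
  rw [← Real.rpow_natCast (((∑ i, ∑ j, ‖A i j‖ ^ (2:ℝ)) : ℝ) ^ ((1:ℝ)/2)) 2,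
    ← Real.rpow_mul hS]
  have h2 : ((1:ℝ)/2) * ((2:ℕ):ℝ) = 1 := by norm_num
  rw [h2, Real.rpow_one]
  refine Finset.sum_congr rfl fun i _ => Finset.sum_congr rfl fun j _ => ?_
  rw [show ((2:ℝ)) = ((2:ℕ):ℝ) by norm_num, Real.rpow_natCast]
  simp [Real.norm_eq_abs, sq_abs]

lemma psd_vanish {A : Matrix (Fin n) (Fin n) ℝ} (hA : A.PosSemidef)
    {v : Fin n → ℝ} (h : v ⬝ᵥ (A *ᵥ v) = 0) : A *ᵥ v = 0 :=
  (hA.dotProduct_mulVec_zero_iff v).mp (by simpa using h)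

lemma psd_smul {A : Matrix (Fin n) (Fin n) ℝ} (hA : A.PosSemidef) {c : ℝ} (hc : 0 ≤ c) :
    (c • A).PosSemidef := by
  refine Matrix.PosSemidef.of_dotProduct_mulVec_nonneg ?_ ?_
  · unfold Matrix.IsHermitian
    rw [Matrix.conjTranspose_smul, hA.1]
    simp
  · intro x
    rw [Matrix.smul_mulVec, dotProduct_smul]
    exact mul_nonneg hc (by simpa using hA.dotProduct_mulVec_nonneg x)


noncomputable def projMat (x₀ : Matrix (Fin n) (Fin n) ℝ) : Matrix (Fin n) (Fin n) ℝ :=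
  Matrix.toEuclideanLin.symm
    (((LinearMap.ker (Matrix.toEuclideanLin x₀))ᗮ.subtypeL ∘L
      Submodule.orthogonalProjectionOnto (LinearMap.ker (Matrix.toEuclideanLin x₀))ᗮ :
        EuclideanSpace ℝ (Fin n) →L[ℝ] EuclideanSpace ℝ (Fin n)) :
      EuclideanSpace ℝ (Fin n) →ₗ[ℝ] EuclideanSpace ℝ (Fin n))

lemma toEL_projMat (x₀ : Matrix (Fin n) (Fin n) ℝ) :
    Matrix.toEuclideanLin (projMat x₀) =
      (((LinearMap.ker (Matrix.toEuclideanLin x₀))ᗮ.subtypeL ∘L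
      Submodule.orthogonalProjectionOnto (LinearMap.ker (Matrix.toEuclideanLin x₀))ᗮ :
        EuclideanSpace ℝ (Fin n) →L[ℝ] EuclideanSpace ℝ (Fin n)) :
      EuclideanSpace ℝ (Fin n) →ₗ[ℝ] EuclideanSpace ℝ (Fin n)) :=
  Matrix.toEuclideanLin.apply_symm_apply _

lemma toEL_mul (M N : Matrix (Fin n) (Fin n) ℝ) :
    Matrix.toEuclideanLin (M * N) = (Matrix.toEuclideanLin M) ∘ₗ (Matrix.toEuclideanLin N) := by
  simp [Matrix.toEuclideanLin_eq_toLin, Matrix.toLin_mul _ (PiLp.basisFun 2 ℝ (Fin n)) _]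

lemma projMat_mem_orth (x₀ : Matrix (Fin n) (Fin n) ℝ) (v : EuclideanSpace ℝ (Fin n)) :
    Matrix.toEuclideanLin (projMat x₀) v ∈ (LinearMap.ker (Matrix.toEuclideanLin x₀))ᗮ := by
  rw [toEL_projMat]; exact Submodule.coe_mem _

lemma projMat_idem (x₀ : Matrix (Fin n) (Fin n) ℝ) : projMat x₀ * projMat x₀ = projMat x₀ := by
  apply Matrix.toEuclideanLin.injective
  rw [toEL_mul, toEL_projMat]
  apply LinearMap.ext
  intro v
  simp only [LinearMap.comp_apply, ContinuousLinearMap.coe_coe, ContinuousLinearMap.comp_apply,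
    Submodule.subtypeL_apply]
  rw [Submodule.orthogonalProjectionOnto_mem_subspace_eq_self]

lemma projMat_symm (x₀ : Matrix (Fin n) (Fin n) ℝ) : (projMat x₀)ᵀ = projMat x₀ := by
  have h : (projMat x₀).IsHermitian := by
    rw [Matrix.isHermitian_iff_isSymmetric, toEL_projMat]
    exact Submodule.starProjection_isSymmetric _
  simpa [Matrix.IsSymm] using h

lemma projMat_fix {x₀ y : Matrix (Fin n) (Fin n) ℝ} (hy : yᵀ = y)
    (hker : LinearMap.ker (Matrix.toEuclideanLin x₀) ≤ LinearMap.ker (Matrix.toEuclideanLin y)) :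
    projMat x₀ * y * projMat x₀ = y := by
  have h1 : y * projMat x₀ = y := by
    apply Matrix.toEuclideanLin.injective
    rw [toEL_mul, toEL_projMat]
    apply LinearMap.ext
    intro v
    simp only [LinearMap.comp_apply, ContinuousLinearMap.coe_coe, ContinuousLinearMap.comp_apply,
      Submodule.subtypeL_apply]
    have hmem : v - (Submodule.orthogonalProjectionOnto (LinearMap.ker (Matrix.toEuclideanLin x₀))ᗮ v : EuclideanSpace ℝ (Fin n))
        ∈ LinearMap.ker (Matrix.toEuclideanLin y) := by
      apply hker
      have := Submodule.sub_starProjection_mem_orthogonal (K := (LinearMap.ker (Matrix.toEuclideanLin x₀))ᗮ) v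
      rwa [Submodule.orthogonal_orthogonal] at this
    have := LinearMap.mem_ker.mp hmem
    rw [map_sub] at this
    have h2 : Matrix.toEuclideanLin y ((Submodule.orthogonalProjectionOnto (LinearMap.ker (Matrix.toEuclideanLin x₀))ᗮ v : EuclideanSpace ℝ (Fin n)))
        = Matrix.toEuclideanLin y v := by
      exact (sub_eq_zero.mp this).symm
    exact h2
  have h2 : projMat x₀ * y = y := by
    have := congrArg Matrix.transpose h1
    rwa [Matrix.transpose_mul, hy, projMat_symm] at this
  rw [Matrix.mul_assoc, h1, h2]


lemma dotProduct_self_nonneg (v : Fin n → ℝ) : 0 ≤ v ⬝ᵥ v :=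
  Finset.sum_nonneg fun i _ => mul_self_nonneg _

lemma dot_conj (P X : Matrix (Fin n) (Fin n) ℝ) (hP : Pᵀ = P) (v : Fin n → ℝ) :
    v ⬝ᵥ ((P * X * P) *ᵥ v) = (P *ᵥ v) ⬝ᵥ (X *ᵥ (P *ᵥ v)) := by
  rw [← Matrix.mulVec_mulVec, ← Matrix.mulVec_mulVec, Matrix.dotProduct_mulVec]
  congr 1
  calc v ᵥ* P = v ᵥ* Pᵀ := by rw [hP]
    _ = P *ᵥ v := Matrix.vecMul_transpose _ _

lemma dot_self_proj (P : Matrix (Fin n) (Fin n) ℝ) (hP : Pᵀ = P) (hPP : P * P = P)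
    (w : Fin n → ℝ) : (P *ᵥ w) ⬝ᵥ (P *ᵥ w) = (P *ᵥ w) ⬝ᵥ w := by
  conv_lhs => rw [Matrix.dotProduct_mulVec]
  congr 1
  rw [← hP, Matrix.vecMul_transpose, Matrix.mulVec_mulVec, hP, hPP]

lemma dot_proj_le (P : Matrix (Fin n) (Fin n) ℝ) (hP : Pᵀ = P) (hPP : P * P = P)
    (w : Fin n → ℝ) : (P *ᵥ w) ⬝ᵥ (P *ᵥ w) ≤ w ⬝ᵥ w := by
  set Q : Matrix (Fin n) (Fin n) ℝ := 1 - P with hQdef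
  have hQ : Qᵀ = Q := by rw [hQdef, Matrix.transpose_sub, Matrix.transpose_one, hP]
  have hQQ : Q * Q = Q := by
    rw [hQdef, Matrix.sub_mul, Matrix.mul_sub, Matrix.mul_sub, hPP]
    simp [Matrix.mul_one, Matrix.one_mul]
  have h1 : (Q *ᵥ w) ⬝ᵥ (Q *ᵥ w) = (Q *ᵥ w) ⬝ᵥ w := dot_self_proj Q hQ hQQ w
  have h2 : 0 ≤ (Q *ᵥ w) ⬝ᵥ (Q *ᵥ w) := dotProduct_self_nonneg _
  have h3 : Q *ᵥ w = w - P *ᵥ w := by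
    rw [hQdef, Matrix.sub_mulVec, Matrix.one_mulVec]
  have h4 : (P *ᵥ w) ⬝ᵥ (P *ᵥ w) = (P *ᵥ w) ⬝ᵥ w := dot_self_proj P hP hPP w
  rw [h1, h3] at h2
  rw [sub_dotProduct] at h2
  rw [h4]
  have := dotProduct_comm (P *ᵥ w) w
  nlinarith [h2]

lemma abs_dot_le (e : Matrix (Fin n) (Fin n) ℝ) (u : Fin n → ℝ) :
    |u ⬝ᵥ (e *ᵥ u)| ≤ ‖e‖ * (u ⬝ᵥ u) := by
  have hb : 0 ≤ ‖e‖ * (u ⬝ᵥ u) := mul_nonneg (norm_nonneg _) (dotProduct_self_nonneg u)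
  rw [← pow_le_pow_iff_left₀ (abs_nonneg _) hb (two_ne_zero)]
  rw [sq_abs]
  have hCS : (u ⬝ᵥ (e *ᵥ u)) ^ 2 ≤ (∑ i, u i ^ 2) * (∑ i, (e *ᵥ u) i ^ 2) := by
    have := Finset.sum_mul_sq_le_sq_mul_sq Finset.univ u (e *ᵥ u)
    simpa [dotProduct] using this
  have hrow : (∑ i, (e *ᵥ u) i ^ 2) ≤ (∑ i, ∑ j, (e i j) ^ 2) * (∑ j, u j ^ 2) := by
    rw [Finset.sum_mul]
    refine Finset.sum_le_sum fun i _ => ?_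
    have := Finset.sum_mul_sq_le_sq_mul_sq Finset.univ (fun j => e i j) u
    simpa [Matrix.mulVec, dotProduct] using this
  have hdot : u ⬝ᵥ u = ∑ i, u i ^ 2 := by
    simp [dotProduct, sq]
  have hfrob := frob_sq e
  calc (u ⬝ᵥ (e *ᵥ u)) ^ 2 ≤ (∑ i, u i ^ 2) * (∑ i, (e *ᵥ u) i ^ 2) := hCS
    _ ≤ (∑ i, u i ^ 2) * ((∑ i, ∑ j, (e i j) ^ 2) * (∑ j, u j ^ 2)) := by
        refine mul_le_mul_of_nonneg_left hrow ?_
        exact Finset.sum_nonneg fun i _ => sq_nonneg _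
    _ = (‖e‖ * (u ⬝ᵥ u)) ^ 2 := by rw [← hfrob, hdot]; ring

lemma norm_mul_proj_le (P A : Matrix (Fin n) (Fin n) ℝ) (hP : Pᵀ = P) (hPP : P * P = P) :
    ‖P * A‖ ≤ ‖A‖ := by
  rw [← pow_le_pow_iff_left₀ (norm_nonneg _) (norm_nonneg _) (two_ne_zero)]
  rw [frob_sq, frob_sq]
  calc ∑ i, ∑ j, ((P * A) i j) ^ 2 = ∑ j, ∑ i, ((P * A) i j) ^ 2 := Finset.sum_comm
    _ ≤ ∑ j, ∑ i, (A i j) ^ 2 := ?_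
    _ = ∑ i, ∑ j, (A i j) ^ 2 := Finset.sum_comm
  refine Finset.sum_le_sum fun j _ => ?_
  have h := dot_proj_le P hP hPP (fun k => A k j)
  have h1 : (P *ᵥ fun k => A k j) ⬝ᵥ (P *ᵥ fun k => A k j) = ∑ i, (P * A) i j ^ 2 := by
    simp [dotProduct, Matrix.mulVec, Matrix.mul_apply, sq, dotProduct]
  have h2 : (fun k => A k j) ⬝ᵥ (fun k => A k j) = ∑ i, A i j ^ 2 := by
    simp [dotProduct, sq]
  rw [h1, h2] at h
  exact h

lemma norm_proj_mul_le (P A : Matrix (Fin n) (Fin n) ℝ) (hP : Pᵀ = P) (hPP : P * P = P) :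
    ‖A * P‖ ≤ ‖A‖ := by
  rw [← Matrix.frobenius_norm_transpose (A * P), Matrix.transpose_mul, hP]
  rw [← Matrix.frobenius_norm_transpose A]
  exact norm_mul_proj_le P Aᵀ hP hPP


lemma herm_of_symm {A : Matrix (Fin n) (Fin n) ℝ} (h : Aᵀ = A) : A.IsHermitian := by
  rw [Matrix.IsHermitian, Matrix.conjTranspose_eq_transpose_of_trivial]; exact h

lemma dot_inner (u v : EuclideanSpace ℝ (Fin n)) :
    (inner ℝ u v : ℝ) = (fun i => u i) ⬝ᵥ (fun i => v i) := by
  simp [PiLp.inner_apply, dotProduct, mul_comm]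

lemma norm_sq_dot (u : EuclideanSpace ℝ (Fin n)) :
    ‖u‖ ^ 2 = (fun i => u i) ⬝ᵥ (fun i => u i) := by
  rw [EuclideanSpace.norm_eq, Real.sq_sqrt]
  · simp [dotProduct, sq, Real.norm_eq_abs, abs_mul_abs_self]
  · exact Finset.sum_nonneg fun i _ => by positivity


lemma symm_of_herm {A : Matrix (Fin n) (Fin n) ℝ} (h : A.IsHermitian) : Aᵀ = A := by
  rw [← Matrix.conjTranspose_eq_transpose_of_trivial]; exact h

lemma delta_lemma {x₀ : Matrix (Fin n) (Fin n) ℝ} (hx₀ : x₀.PosSemidef) :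
    ∃ δ > (0:ℝ), ∀ e : Matrix (Fin n) (Fin n) ℝ, eᵀ = e →
      projMat x₀ * e * projMat x₀ = e → ‖e‖ ≤ δ → (x₀ + e).PosSemidef := by
  classical
  set U : Submodule ℝ (EuclideanSpace ℝ (Fin n)) := (LinearMap.ker (Matrix.toEuclideanLin x₀))ᗮ with hU
  set S : Set (EuclideanSpace ℝ (Fin n)) := sphere (0 : EuclideanSpace ℝ (Fin n)) 1 ∩ (U : Set _) with hS
  have hx₀symm : x₀ᵀ = x₀ := symm_of_herm hx₀.1
  have hfix : projMat x₀ * x₀ * projMat x₀ = x₀ := projMat_fix hx₀symm le_rfl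
  have hbridge : ∀ u : EuclideanSpace ℝ (Fin n),
      (inner ℝ u (Matrix.toEuclideanLin x₀ u) : ℝ) = (fun i => u i) ⬝ᵥ (x₀ *ᵥ (fun i => u i)) := by
    intro u; rw [dot_inner]; rfl
  by_cases hSne : S.Nonempty
  · have hScpt : IsCompact S := by
      apply (isCompact_sphere (0 : EuclideanSpace ℝ (Fin n)) 1).inter_right
      exact Submodule.closed_of_finiteDimensional U
    have hfc : Continuous fun u : EuclideanSpace ℝ (Fin n) =>
        (inner ℝ u (Matrix.toEuclideanLin x₀ u) : ℝ) :=
      continuous_id.inner (Matrix.toEuclideanLin x₀).continuous_of_finiteDimensional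
    obtain ⟨u₀, hu₀S, hminOn⟩ := hScpt.exists_isMinOn hSne hfc.continuousOn
    have hmin : ∀ w ∈ S, (inner ℝ u₀ (Matrix.toEuclideanLin x₀ u₀) : ℝ) ≤
        (inner ℝ w (Matrix.toEuclideanLin x₀ w) : ℝ) := fun w hw => hminOn hw
    set δ : ℝ := (inner ℝ u₀ (Matrix.toEuclideanLin x₀ u₀) : ℝ) with hδ
    have hu₀U : u₀ ∈ U := hu₀S.2
    have hu₀n : ‖u₀‖ = 1 := by
      have := hu₀S.1
      rwa [mem_sphere_zero_iff_norm] at this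
    have hδpos : 0 < δ := by
      have h0le : (0:ℝ) ≤ δ := by
        rw [hδ, hbridge]
        simpa using hx₀.dotProduct_mulVec_nonneg (fun i => u₀ i)
      rcases lt_or_eq_of_le h0le with h | h
      · exact h
      · exfalso
        have h0 : x₀ *ᵥ (fun i => u₀ i) = 0 := by
          refine psd_vanish hx₀ ?_
          rw [← hbridge, ← hδ]
          exact h.symm
        have hker : u₀ ∈ LinearMap.ker (Matrix.toEuclideanLin x₀) := by
          rw [LinearMap.mem_ker]
          ext i; exact congrFun h0 i
        have h1 : (inner ℝ u₀ u₀ : ℝ) = 0 :=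
          (Submodule.mem_orthogonal (LinearMap.ker (Matrix.toEuclideanLin x₀)) u₀).mp hu₀U u₀ hker
        have h2 : u₀ = 0 := by rwa [inner_self_eq_zero] at h1
        rw [h2] at hu₀n
        simp at hu₀n
    refine ⟨δ, hδpos, fun e he heP hen => ?_⟩
    refine Matrix.PosSemidef.of_dotProduct_mulVec_nonneg ?_ ?_
    · exact herm_of_symm (by rw [Matrix.transpose_add, hx₀symm, he])
    · intro v
      have hstar : star v = v := by
        funext i; simp
      rw [hstar, Matrix.add_mulVec, dotProduct_add]
      set u : Fin n → ℝ := projMat x₀ *ᵥ v with hu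
      have h1 : v ⬝ᵥ (x₀ *ᵥ v) = u ⬝ᵥ (x₀ *ᵥ u) := by
        conv_lhs => rw [← hfix]
        rw [dot_conj _ _ (projMat_symm x₀) v]
      have h2 : v ⬝ᵥ (e *ᵥ v) = u ⬝ᵥ (e *ᵥ u) := by
        conv_lhs => rw [← heP]
        rw [dot_conj _ _ (projMat_symm x₀) v]
      rcases eq_or_ne (u ⬝ᵥ u) 0 with hu0 | hu0
      · have hu' : u = 0 := dotProduct_self_eq_zero.mp hu0
        rw [h1, h2, hu']
        simp
      · -- normalize
        have v₂ : EuclideanSpace ℝ (Fin n) := WithLp.toLp 2 v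
        set uE : EuclideanSpace ℝ (Fin n) := Matrix.toEuclideanLin (projMat x₀) (WithLp.toLp 2 v) with huE
        have huEu : (fun i => uE i) = u := by
          funext i; rfl
        have hc2 : ‖uE‖ ^ 2 = u ⬝ᵥ u := by rw [norm_sq_dot, huEu]
        have hcpos : 0 < ‖uE‖ := by
          rcases lt_or_eq_of_le (norm_nonneg uE) with h | h
          · exact h
          · exfalso; apply hu0; rw [← hc2, ← h]; ring
        have hcne : ‖uE‖ ≠ 0 := ne_of_gt hcpos
        have hwS : ‖uE‖⁻¹ • uE ∈ S := by
          constructor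
          · rw [mem_sphere_zero_iff_norm, norm_smul]
            rw [norm_inv, norm_norm]
            field_simp
          · exact U.smul_mem _ (projMat_mem_orth x₀ (WithLp.toLp 2 v))
        have hminw := hmin _ hwS
        have hfw : (inner ℝ (‖uE‖⁻¹ • uE) (Matrix.toEuclideanLin x₀ (‖uE‖⁻¹ • uE)) : ℝ)
            = ‖uE‖⁻¹ * ‖uE‖⁻¹ * (u ⬝ᵥ (x₀ *ᵥ u)) := by
          rw [LinearMap.map_smul, real_inner_smul_left, real_inner_smul_right]
          rw [hbridge uE, huEu]
          ring
        have hδu : δ * (u ⬝ᵥ u) ≤ u ⬝ᵥ (x₀ *ᵥ u) := by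
          rw [hfw] at hminw
          have := mul_le_mul_of_nonneg_right hminw (sq_nonneg ‖uE‖)
          calc δ * (u ⬝ᵥ u) = δ * ‖uE‖ ^ 2 := by rw [hc2]
            _ ≤ (‖uE‖⁻¹ * ‖uE‖⁻¹ * (u ⬝ᵥ (x₀ *ᵥ u))) * ‖uE‖ ^ 2 := this
            _ = (u ⬝ᵥ (x₀ *ᵥ u)) * (‖uE‖⁻¹ * ‖uE‖) * (‖uE‖⁻¹ * ‖uE‖) := by ring
            _ = u ⬝ᵥ (x₀ *ᵥ u) := by rw [inv_mul_cancel₀ hcne]; ring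
        have habs := abs_dot_le e u
        have h3 : ‖e‖ * (u ⬝ᵥ u) ≤ δ * (u ⬝ᵥ u) :=
          mul_le_mul_of_nonneg_right hen (dotProduct_self_nonneg u)
        have h4 := (abs_le.mp habs).1
        rw [h1, h2]
        linarith
  · refine ⟨1, one_pos, fun e he heP hen => ?_⟩
    have hUbot : U = ⊥ := by
      by_contra hne
      obtain ⟨u, huU, hune⟩ := Submodule.exists_mem_ne_zero_of_ne_bot hne
      apply hSne
      refine ⟨‖u‖⁻¹ • u, ?_, U.smul_mem _ huU⟩
      rw [mem_sphere_zero_iff_norm, norm_smul, norm_inv, norm_norm]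
      exact inv_mul_cancel₀ (norm_ne_zero_iff.mpr hune)
    have hP0 : projMat x₀ = 0 := by
      apply Matrix.toEuclideanLin.injective
      apply LinearMap.ext
      intro v
      have := projMat_mem_orth x₀ v
      rw [← hU, hUbot, Submodule.mem_bot] at this
      rw [this]
      simp
    have he0 : e = 0 := by rw [← heP, hP0]; simp
    rw [he0, add_zero]
    exact hx₀

set_option maxHeartbeats 1600000 in
theorem amenable_psd_inter (n : ℕ) (V : AffineSubspace ℝ (Matrix (Fin n) (Fin n) ℝ)) :
    AmenableSet (psdCone n ∩ (V : Set (Matrix (Fin n) (Fin n) ℝ))) := by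
  classical
  intro F hF B hB
  obtain ⟨hFclosed, hFconv, hFsub, hface⟩ := hF
  rcases Set.eq_empty_or_nonempty F with hFe | hFne
  · refine ⟨1, one_pos, fun x hx => ?_⟩
    rw [hFe, AffineSubspace.span_empty] at hx
    rw [AffineSubspace.bot_coe] at hx
    exact absurd hx.1 (Set.notMem_empty x)
  · -- choose x₀ ∈ F with minimal kernel dimension
    set D : Set ℕ := {d | ∃ y ∈ F, Module.finrank ℝ (LinearMap.ker (Matrix.toEuclideanLin y)) = d}
      with hD
    have hDne : D.Nonempty := by
      obtain ⟨y, hy⟩ := hFne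
      exact ⟨_, y, hy, rfl⟩
    obtain ⟨x₀, hx₀F, hx₀d⟩ := Nat.sInf_mem hDne
    have hx₀psd : x₀.PosSemidef := (hFsub hx₀F).1
    have hx₀V : x₀ ∈ V := (hFsub hx₀F).2
    have hx₀symm : x₀ᵀ = x₀ := symm_of_herm hx₀psd.1
    set K := LinearMap.ker (Matrix.toEuclideanLin x₀) with hK
    -- minimality gives : K is contained in every kernel
    have hkersub : ∀ y ∈ F, K ≤ LinearMap.ker (Matrix.toEuclideanLin y) := by
      intro y hyF
      have hypsd : y.PosSemidef := (hFsub hyF).1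
      set m : Matrix (Fin n) (Fin n) ℝ := (1/2 : ℝ) • x₀ + (1/2 : ℝ) • y with hm
      have hmF : m ∈ F := hFconv hx₀F hyF (by norm_num) (by norm_num) (by norm_num)
      have hsub1 : LinearMap.ker (Matrix.toEuclideanLin m) ≤ K ⊓ LinearMap.ker (Matrix.toEuclideanLin y) := by
        intro v hv
        have hv' : m *ᵥ (fun i => v i) = 0 := by
          have := LinearMap.mem_ker.mp hv
          exact funext fun i => congrFun (congrArg (fun (w : EuclideanSpace ℝ (Fin n)) => (w : Fin n → ℝ)) this) i
        have hdot : (fun i => v i) ⬝ᵥ (m *ᵥ (fun i => v i)) = 0 := by rw [hv']; simp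
        have hexp : (fun i => v i) ⬝ᵥ (m *ᵥ (fun i => v i)) =
            (1/2 : ℝ) * ((fun i => v i) ⬝ᵥ (x₀ *ᵥ (fun i => v i)))
            + (1/2 : ℝ) * ((fun i => v i) ⬝ᵥ (y *ᵥ (fun i => v i))) := by
          rw [hm, Matrix.add_mulVec, dotProduct_add, Matrix.smul_mulVec,
            Matrix.smul_mulVec, dotProduct_smul, dotProduct_smul]
          simp
        have h1 : 0 ≤ (fun i => v i) ⬝ᵥ (x₀ *ᵥ (fun i => v i)) := by simpa using hx₀psd.dotProduct_mulVec_nonneg (fun i => v i)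
        have h2 : 0 ≤ (fun i => v i) ⬝ᵥ (y *ᵥ (fun i => v i)) := by simpa using hypsd.dotProduct_mulVec_nonneg (fun i => v i)
        have hx0 : (fun i => v i) ⬝ᵥ (x₀ *ᵥ (fun i => v i)) = 0 := by
          rw [hexp] at hdot; linarith
        have hy0 : (fun i => v i) ⬝ᵥ (y *ᵥ (fun i => v i)) = 0 := by
          rw [hexp] at hdot; linarith
        refine Submodule.mem_inf.mpr ⟨?_, ?_⟩
        · exact LinearMap.mem_ker.mpr (by ext i; exact congrFun (psd_vanish hx₀psd hx0) i)
        · exact LinearMap.mem_ker.mpr (by ext i; exact congrFun (psd_vanish hypsd hy0) i)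
      have hsub1' : LinearMap.ker (Matrix.toEuclideanLin m) ≤ K := hsub1.trans inf_le_left
      have hrk : Module.finrank ℝ K ≤ Module.finrank ℝ (LinearMap.ker (Matrix.toEuclideanLin m)) := by
        rw [hK, hx₀d]
        exact Nat.sInf_le ⟨m, hmF, rfl⟩
      have heq : LinearMap.ker (Matrix.toEuclideanLin m) = K :=
        Submodule.eq_of_le_of_finrank_le hsub1' hrk
      exact heq ▸ (hsub1.trans inf_le_right)
    set P := projMat x₀ with hPdef
    have hPsymm : Pᵀ = P := projMat_symm x₀
    have hPP : P * P = P := projMat_idem x₀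
    have hfixF : ∀ y ∈ F, P * y * P = y := fun y hyF =>
      projMat_fix (symm_of_herm (hFsub hyF).1.1) (hkersub y hyF)
    have hfix₀ : P * x₀ * P = x₀ := hfixF x₀ hx₀F
    obtain ⟨δ, hδpos, hδ⟩ := delta_lemma hx₀psd
    -- G ∩ V ⊆ F
    have hGVF : ∀ y : Matrix (Fin n) (Fin n) ℝ, y.PosSemidef → P * y * P = y → y ∈ V → y ∈ F := by
      intro y hypsd hyP hyV
      by_cases hxy : y = x₀
      · rw [hxy]; exact hx₀F
      have hne : x₀ - y ≠ 0 := sub_ne_zero.mpr (Ne.symm hxy)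
      have hnpos : 0 < ‖x₀ - y‖ := norm_pos_iff.mpr hne
      set t : ℝ := δ / ‖x₀ - y‖ with ht
      have htpos : 0 < t := div_pos hδpos hnpos
      have hysymm : yᵀ = y := symm_of_herm hypsd.1
      set z : Matrix (Fin n) (Fin n) ℝ := x₀ + t • (x₀ - y) with hz
      have hzpsd : z.PosSemidef := by
        refine hδ (t • (x₀ - y)) ?_ ?_ ?_
        · rw [Matrix.transpose_smul, Matrix.transpose_sub, hx₀symm, hysymm]
        · rw [mul_smul_comm, smul_mul_assoc, Matrix.mul_sub, Matrix.sub_mul, hfix₀, hyP]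
        · rw [norm_smul, Real.norm_eq_abs, abs_of_pos htpos, ht]
          rw [div_mul_cancel₀ _ (ne_of_gt hnpos)]
      have hzV : z ∈ V := by
        have := V.smul_vsub_vadd_mem t hx₀V hyV hx₀V
        have heq : t • (x₀ -ᵥ y) +ᵥ x₀ = z := by
          rw [hz]; simp [vsub_eq_sub, vadd_eq_add]; abel
        rwa [heq] at this
      set α : ℝ := 1 / (1 + t) with hα
      have h1t : (0:ℝ) < 1 + t := by linarith
      have hαpos : 0 < α := by rw [hα]; exact div_pos one_pos h1t
      have hα1 : α < 1 := by
        rw [hα, div_lt_one h1t]; linarith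
      have hcombo : α • z + (1 - α) • y = x₀ := by
        rw [hz, hα]
        have h1t' : (1 + t) ≠ 0 := ne_of_gt h1t
        match_scalars <;> field_simp <;> ring
      have := hface z ⟨hzpsd, hzV⟩ y ⟨hypsd, hyV⟩ α hαpos hα1 (by rw [hcombo]; exact hx₀F)
      exact this.2
    -- bounded data
    obtain ⟨R, hR⟩ := hB.subset_closedBall 0
    set M : ℝ := |R| + ‖x₀‖ + 1 with hM
    have hMpos : 0 < M := by positivity
    refine ⟨M / δ, by positivity, fun x hx => ?_⟩
    have hxV : x ∈ V := by
      have hle : affineSpan ℝ F ≤ V := affineSpan_le.mpr (fun y hy => (hFsub hy).2)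
      exact hle hx.1
    -- the symmetric P-invariant subspace
    set W : Submodule ℝ (Matrix (Fin n) (Fin n) ℝ) :=
      { carrier := {X | Xᵀ = X ∧ P * X * P = X}
        add_mem' := by
          rintro a b ⟨ha1, ha2⟩ ⟨hb1, hb2⟩
          constructor
          · rw [Matrix.transpose_add, ha1, hb1]
          · rw [Matrix.mul_add, Matrix.add_mul, ha2, hb2]
        zero_mem' := by
          constructor
          · exact Matrix.transpose_zero
          · rw [Matrix.mul_zero, Matrix.zero_mul]
        smul_mem' := by
          rintro c a ⟨ha1, ha2⟩
          constructor
          · rw [Matrix.transpose_smul, ha1]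
          · rw [mul_smul_comm, smul_mul_assoc, ha2] } with hW
    have hxW : x ∈ W := by
      have hle : affineSpan ℝ F ≤ W.toAffineSubspace := by
        rw [affineSpan_le]
        intro y hy
        rw [SetLike.mem_coe, Submodule.mem_toAffineSubspace]
        exact ⟨symm_of_herm (hFsub hy).1.1, hfixF y hy⟩
      exact Submodule.mem_toAffineSubspace.mp (hle hx.1)
    have hxsymm : xᵀ = x := hxW.1
    have hxP : P * x * P = x := hxW.2
    have hxM : ‖x - x₀‖ ≤ M := by
      have hxB : ‖x‖ ≤ R := by
        have := hR hx.2
        rwa [Metric.mem_closedBall, dist_zero_right] at this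
      calc ‖x - x₀‖ ≤ ‖x‖ + ‖x₀‖ := norm_sub_le x x₀
        _ ≤ |R| + ‖x₀‖ := by have := le_abs_self R; linarith
        _ ≤ M := by rw [hM]; linarith
    -- key estimate for every ε > 0
    have key : ∀ ε : ℝ, 0 < ε → infDist x F ≤ M / δ * (infDist x (psdCone n ∩ (V : Set _)) + ε) := by
      intro ε hε
      set d := infDist x (psdCone n ∩ (V : Set _)) with hd
      have hdnn : 0 ≤ d := infDist_nonneg
      have hCne : (psdCone n ∩ (V : Set _)).Nonempty := ⟨x₀, hFsub hx₀F⟩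
      obtain ⟨c, hcC, hcd⟩ := (infDist_lt_iff hCne).mp (by rw [← hd]; linarith : infDist x (psdCone n ∩ (V : Set _)) < d + ε)
      set g : Matrix (Fin n) (Fin n) ℝ := P * c * P with hg
      have hcpsd : c.PosSemidef := hcC.1
      have hcsymm : cᵀ = c := symm_of_herm hcpsd.1
      have hgpsd : g.PosSemidef := by
        have := hcpsd.conjTranspose_mul_mul_same P
        rwa [Matrix.conjTranspose_eq_transpose_of_trivial, hPsymm] at this
      have hgsymm : gᵀ = g := by
        rw [hg, Matrix.transpose_mul, Matrix.transpose_mul, hPsymm, hcsymm, Matrix.mul_assoc]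
      have hgP : P * g * P = g := by
        rw [hg, ← Matrix.mul_assoc, ← Matrix.mul_assoc, hPP, Matrix.mul_assoc P c P,
          Matrix.mul_assoc P (c * P) P, Matrix.mul_assoc c P P, hPP, ← Matrix.mul_assoc]
      set e : Matrix (Fin n) (Fin n) ℝ := x - g with he
      have hesymm : eᵀ = e := by rw [he, Matrix.transpose_sub, hxsymm, hgsymm]
      have heP : P * e * P = e := by
        rw [he, Matrix.mul_sub, Matrix.sub_mul, hxP, hgP]
      have hnorme : ‖e‖ ≤ d + ε := by
        have hePform : e = P * (x - c) * P := by
          rw [he, Matrix.mul_sub, Matrix.sub_mul, hxP, hg]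
        rw [hePform]
        calc ‖P * (x - c) * P‖ = ‖P * ((x - c) * P)‖ := by rw [Matrix.mul_assoc]
          _ ≤ ‖(x - c) * P‖ := norm_mul_proj_le P _ hPsymm hPP
          _ ≤ ‖x - c‖ := norm_proj_mul_le P _ hPsymm hPP
          _ ≤ d + ε := by
              have : dist x c = ‖x - c‖ := dist_eq_norm x c
              linarith [hcd, this.symm.le, this.le]
      rcases eq_or_ne e 0 with he0 | hene
      · have hxg : x = g := by
          have h0 : x - g = 0 := by rw [← he, he0]
          exact sub_eq_zero.mp h0
        have hxF : x ∈ F := hGVF x (hxg ▸ hgpsd) hxP hxV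
        rw [infDist_zero_of_mem hxF]
        positivity
      · set s : ℝ := ‖e‖ with hs
        have hspos : 0 < s := norm_pos_iff.mpr hene
        set lam : ℝ := s / (s + δ) with hlam
        have hsδ : 0 < s + δ := by linarith
        have hlampos : 0 < lam := by rw [hlam]; exact div_pos hspos hsδ
        have hlamlt : lam < 1 := by rw [hlam, div_lt_one hsδ]; linarith
        set z : Matrix (Fin n) (Fin n) ℝ := (1 - lam) • x + lam • x₀ with hz
        have hzV : z ∈ V := by
          have := V.smul_vsub_vadd_mem lam hx₀V hxV hxV
          have heq : lam • (x₀ -ᵥ x) +ᵥ x = z := by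
            rw [hz]; simp [vsub_eq_sub, vadd_eq_add, smul_sub, sub_smul]; abel
          rwa [heq] at this
        have hxge : x = g + e := by rw [he]; abel
        have hzdecomp : z = (1 - lam) • g + lam • (x₀ + (δ / s) • e) := by
          rw [hz, hxge]
          rw [smul_add, smul_add, smul_smul]
          have hcoeff : lam * (δ / s) = 1 - lam := by
            rw [hlam]
            field_simp
            ring
          rw [hcoeff]
          abel
        have hzpsd : z.PosSemidef := by
          rw [hzdecomp]
          refine Matrix.PosSemidef.add (psd_smul hgpsd (by linarith)) (psd_smul ?_ (le_of_lt hlampos))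
          refine hδ ((δ / s) • e) ?_ ?_ ?_
          · rw [Matrix.transpose_smul, hesymm]
          · rw [mul_smul_comm, smul_mul_assoc, heP]
          · rw [norm_smul, Real.norm_eq_abs, abs_of_pos (by positivity : (0:ℝ) < δ / s), ← hs]
            rw [div_mul_cancel₀ _ (ne_of_gt hspos)]
        have hzP : P * z * P = z := by
          rw [hz, Matrix.mul_add, Matrix.add_mul]
          rw [mul_smul_comm, smul_mul_assoc, mul_smul_comm,
            smul_mul_assoc, hxP, hfix₀]
        have hzF : z ∈ F := hGVF z hzpsd hzP hzV
        have hdist : dist x z = lam * ‖x - x₀‖ := by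
          rw [dist_eq_norm, hz]
          have : x - ((1 - lam) • x + lam • x₀) = lam • (x - x₀) := by
            rw [sub_smul, one_smul, smul_sub]; abel
          rw [this, norm_smul, Real.norm_eq_abs, abs_of_pos hlampos]
        have hlamle : lam ≤ (d + ε) / δ := by
          rw [hlam]
          calc s / (s + δ) ≤ s / δ := by
                apply div_le_div_of_nonneg_left (le_of_lt hspos) hδpos
                linarith
            _ ≤ (d + ε) / δ := by gcongr
        calc infDist x F ≤ dist x z := infDist_le_dist_of_mem hzF
          _ = lam * ‖x - x₀‖ := hdist
          _ ≤ ((d + ε) / δ) * M := by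
              apply mul_le_mul hlamle hxM (norm_nonneg _)
              positivity
          _ = M / δ * (d + ε) := by ring
    refine le_of_forall_pos_le_add fun ε' hε' => ?_
    have hεp : 0 < ε' * δ / M := by positivity
    have hkey := key (ε' * δ / M) hεp
    have hMne : M ≠ 0 := ne_of_gt hMpos
    have hδne : δ ≠ 0 := ne_of_gt hδpos
    calc infDist x F ≤ M / δ * (infDist x (psdCone n ∩ (V : Set _)) + ε' * δ / M) := hkey
      _ = M / δ * infDist x (psdCone n ∩ (V : Set _)) + ε' := by field_simp

end SpectraAux

set_option maxHeartbeats 1000000 in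
theorem amenable_image {E : Type*} [NormedAddCommGroup E] [NormedSpace ℝ E] [FiniteDimensional ℝ E]
    {E' : Type*} [NormedAddCommGroup E'] [NormedSpace ℝ E'] {C : Set E}
    (A : E →ᵃ[ℝ] E') (hA : Function.Injective A) (hC : AmenableSet C) :
    AmenableSet (A '' C) := by
  classical
  have hAco : Continuous A := A.continuous_of_finiteDimensional
  set L := A.linear with hL
  have hdiff : ∀ u v : E, A u - A v = L (u - v) := by
    intro u v
    have := A.linearMap_vsub u v
    simpa [vsub_eq_sub] using this.symm
  have hLinj : Function.Injective L := by
    intro u v huv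
    apply hA
    have h0 : A u - A v = 0 := by rw [hdiff u v, map_sub, huv, sub_self]
    exact sub_eq_zero.mp h0
  -- Lipschitz constant
  set CL := LinearMap.toContinuousLinearMap L with hCL
  set Mc : ℝ := ‖CL‖ + 1 with hMc
  have hMcpos : 0 < Mc := by positivity
  have hlip : ∀ u v : E, dist (A u) (A v) ≤ Mc * dist u v := by
    intro u v
    rw [dist_eq_norm, dist_eq_norm, hdiff u v]
    calc ‖L (u - v)‖ = ‖CL (u - v)‖ := rfl
      _ ≤ ‖CL‖ * ‖u - v‖ := CL.le_opNorm _
      _ ≤ Mc * ‖u - v‖ := by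
          apply mul_le_mul_of_nonneg_right _ (norm_nonneg _)
          rw [hMc]; linarith
  -- anti-Lipschitz constant
  set eL : E ≃L[ℝ] LinearMap.range L :=
    (LinearEquiv.ofInjective L hLinj).toContinuousLinearEquiv with heL
  set cc : ℝ := ‖(eL.symm : LinearMap.range L →L[ℝ] E)‖ + 1 with hcc
  have hccpos : 0 < cc := by positivity
  have hanti : ∀ u v : E, dist u v ≤ cc * dist (A u) (A v) := by
    intro u v
    rw [dist_eq_norm, dist_eq_norm, hdiff u v]
    have h1 : u - v = eL.symm (eL (u - v)) := (eL.symm_apply_apply _).symm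
    have h2 : ‖eL (u - v)‖ = ‖L (u - v)‖ := by
      have h3 : ((eL (u - v) : LinearMap.range L) : E') = L (u - v) := by
        simp [heL, LinearEquiv.coe_toContinuousLinearEquiv', LinearEquiv.ofInjective_apply]
      rw [show ‖eL (u - v)‖ = ‖((eL (u - v) : LinearMap.range L) : E')‖ from rfl, h3]
    calc ‖u - v‖ = ‖eL.symm (eL (u - v))‖ := by rw [← h1]
      _ ≤ ‖(eL.symm : LinearMap.range L →L[ℝ] E)‖ * ‖eL (u - v)‖ :=
          (eL.symm : LinearMap.range L →L[ℝ] E).le_opNorm _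
      _ ≤ cc * ‖L (u - v)‖ := by
          have hn : ‖eL (u - v)‖ = ‖L (u - v)‖ := h2
          rw [hn]
          apply mul_le_mul_of_nonneg_right _ (norm_nonneg _)
          rw [hcc]; linarith
  -- main argument
  intro F' hF' B' hB'
  rcases Set.eq_empty_or_nonempty F' with hFe | hFne
  · refine ⟨1, one_pos, fun x hx => ?_⟩
    rw [hFe, AffineSubspace.span_empty, AffineSubspace.bot_coe] at hx
    exact absurd hx.1 (Set.notMem_empty x)
  obtain ⟨hF'closed, hF'conv, hF'sub, hface'⟩ := hF'
  set F : Set E := A ⁻¹' F' with hF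
  have hFC : F ⊆ C := by
    intro x hx
    obtain ⟨c', hc', hc'e⟩ := hF'sub hx
    rwa [← hA hc'e]
  have himg : A '' F = F' := by
    apply Set.Subset.antisymm
    · rintro _ ⟨x, hx, rfl⟩; exact hx
    · intro y hy
      obtain ⟨c', hc', rfl⟩ := hF'sub hy
      exact ⟨c', hy, rfl⟩
  have hFface : IsFace C F := by
    refine ⟨hF'closed.preimage hAco, hF'conv.affine_preimage A, hFC, ?_⟩
    intro x hx y hy α hα0 hα1 hcombo
    have hcombo' : α • A x + (1 - α) • A y ∈ F' := by
      rw [← Convex.combo_affine_apply (by ring : α + (1 - α) = 1)]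
      exact hcombo
    have := hface' (A x) ⟨x, hx, rfl⟩ (A y) ⟨y, hy, rfl⟩ α hα0 hα1 hcombo'
    exact ⟨this.1, this.2⟩
  have hFne' : F.Nonempty := by
    obtain ⟨y, hy⟩ := hFne
    obtain ⟨c', hc', rfl⟩ := hF'sub hy
    exact ⟨c', hy⟩
  -- bounded preimage
  obtain ⟨R', hR'⟩ := hB'.subset_closedBall 0
  set B : Set E := A ⁻¹' B' with hB
  have hBbdd : IsBounded B := by
    apply (isBounded_closedBall (x := (0:E)) (r := cc * (|R'| + ‖A 0‖))).subset
    intro x hx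
    rw [Metric.mem_closedBall]
    calc dist x 0 ≤ cc * dist (A x) (A 0) := hanti x 0
      _ ≤ cc * (|R'| + ‖A 0‖) := by
          apply mul_le_mul_of_nonneg_left _ (le_of_lt hccpos)
          calc dist (A x) (A 0) ≤ ‖A x‖ + ‖A 0‖ := by
                rw [dist_eq_norm]; exact norm_sub_le _ _
            _ ≤ |R'| + ‖A 0‖ := by
                have := hR' hx
                rw [Metric.mem_closedBall, dist_zero_right] at this
                have h2 := le_abs_self R'
                linarith
  obtain ⟨κ, hκpos, hκ⟩ := hC F hFface B hBbdd
  refine ⟨Mc * κ * cc, by positivity, ?_⟩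
  intro x' hx'
  have hspan : (affineSpan ℝ F').carrier = ((affineSpan ℝ F).map A).carrier := by
    rw [AffineSubspace.map_span, himg]
  have hx'span : x' ∈ (affineSpan ℝ F).map A := by
    have : x' ∈ (affineSpan ℝ F') := hx'.1
    rw [← AffineSubspace.mem_coe] at this ⊢
    rw [AffineSubspace.map_span, himg]
    exact this
  obtain ⟨x, hxspan, rfl⟩ := hx'span
  have hxB : x ∈ B := hx'.2
  have hmain := hκ x ⟨hxspan, hxB⟩
  -- infDist (A x) F' ≤ Mc * infDist x F
  have h1 : infDist (A x) F' ≤ Mc * infDist x F := by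
    refine le_of_forall_pos_le_add fun ε hε => ?_
    have hεM : 0 < ε / Mc := by positivity
    obtain ⟨f, hfF, hfd⟩ := (infDist_lt_iff hFne').mp
      (by linarith : infDist x F < infDist x F + ε / Mc)
    calc infDist (A x) F' ≤ dist (A x) (A f) := by
          apply infDist_le_dist_of_mem
          rw [← himg]; exact ⟨f, hfF, rfl⟩
      _ ≤ Mc * dist x f := hlip x f
      _ ≤ Mc * (infDist x F + ε / Mc) := by
          apply mul_le_mul_of_nonneg_left (le_of_lt hfd) (le_of_lt hMcpos)
      _ = Mc * infDist x F + ε := by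
          rw [mul_add, mul_div_cancel₀ _ (ne_of_gt hMcpos)]
  -- infDist x C ≤ cc * infDist (A x) (A '' C)
  have h2 : infDist x C ≤ cc * infDist (A x) (A '' C) := by
    refine le_of_forall_pos_le_add fun ε hε => ?_
    obtain ⟨f0, hf0⟩ := hFne'
    have hCne : (A '' C).Nonempty := ⟨A f0, f0, hFC hf0, rfl⟩
    have hεc : 0 < ε / cc := by positivity
    obtain ⟨y', hy'C, hy'd⟩ := (infDist_lt_iff hCne).mp
      (by linarith : infDist (A x) (A '' C) < infDist (A x) (A '' C) + ε / cc)
    obtain ⟨cpt, hcpt, rfl⟩ := hy'C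
    calc infDist x C ≤ dist x cpt := infDist_le_dist_of_mem hcpt
      _ ≤ cc * dist (A x) (A cpt) := hanti x cpt
      _ ≤ cc * (infDist (A x) (A '' C) + ε / cc) :=
          mul_le_mul_of_nonneg_left (le_of_lt hy'd) (le_of_lt hccpos)
      _ = cc * infDist (A x) (A '' C) + ε := by
          rw [mul_add, mul_div_cancel₀ _ (ne_of_gt hccpos)]
  calc infDist (A x) F' ≤ Mc * infDist x F := h1
    _ ≤ Mc * (κ * infDist x C) := by
        apply mul_le_mul_of_nonneg_left hmain (le_of_lt hMcpos)
    _ ≤ Mc * (κ * (cc * infDist (A x) (A '' C))) := by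
        apply mul_le_mul_of_nonneg_left _ (le_of_lt hMcpos)
        apply mul_le_mul_of_nonneg_left h2 (le_of_lt hκpos)
    _ = Mc * κ * cc * infDist (A x) (A '' C) := by ring


/-- Corollary 3.5(ii): spectrahedral sets are amenable. The intersection of the PSD
cone with any affine subspace is amenable, and so is its image under any injective
affine map into another finite-dimensional space. -/
theorem spectrahedral_amenable (n : ℕ) (V : AffineSubspace ℝ (Matrix (Fin n) (Fin n) ℝ))
    {E' : Type*} [NormedAddCommGroup E'] [InnerProductSpace ℝ E'] [FiniteDimensional ℝ E']
    (A : Matrix (Fin n) (Fin n) ℝ →ᵃ[ℝ] E') (hA : Function.Injective A) :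
    AmenableSet (psdCone n ∩ (V : Set (Matrix (Fin n) (Fin n) ℝ))) ∧
    AmenableSet (A '' (psdCone n ∩ (V : Set (Matrix (Fin n) (Fin n) ℝ)))) :=
  ⟨SpectraAux.amenable_psd_inter n V,
   amenable_image A hA (SpectraAux.amenable_psd_inter n V)⟩
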